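/- Let X and Y be two mm-spaces. For any natural number n ≥ 1 and any real number p with 1 ≤ p ≤ +∞, the box distance satisfies □(X_p^n, Y_p^n) ≤ n · n! · □(X, Y). -/

import Mathlib

open MeasureTheory Filter Topology Bornology
open scoped ENNReal

noncomputable section

/-- The `l_p`-distance on the `n`-fold product for `1 ≤ p < ∞`. -/
def lpDist {X : Type*} (d : X → X → ℝ) (p : ℝ) {n : ℕ} (x y : Fin n → X) : ℝ :=
  (∑ i, d (x i) (y i) ^ p) ^ (1 / p)

/-- The `l_p`-distance on the `n`-fold product for `1 ≤ p ≤ ∞`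
(`l_∞` is the sup distance). -/
def lpDist' {X : Type*} (d : X → X → ℝ) (p : ℝ≥0∞) {n : ℕ} (x y : Fin n → X) : ℝ :=
  if p = ∞ then ⨆ i, d (x i) (y i) else lpDist d p.toReal x y

/-- A parameter of an mm-space: a Borel map `φ : [0,1) → X` pushing the Lebesgue measure
forward to `μ`. -/
def IsParameter {X : Type*} [MeasurableSpace X] (φ : ℝ → X) (μ : Measure X) : Prop :=
  Measurable φ ∧ Measure.map φ (volume.restrict (Set.Ico (0 : ℝ) 1)) = μ

/-- The box distance `□(X,Y)` between two mm-spaces, given by explicit distance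
functions `dX`, `dY`. -/
def boxDist {X Y : Type*} [MeasurableSpace X] [MeasurableSpace Y]
    (dX : X → X → ℝ) (dY : Y → Y → ℝ) (μX : Measure X) (μY : Measure Y) : ℝ :=
  sInf {ε : ℝ | 0 ≤ ε ∧ ∃ φ : ℝ → X, ∃ ψ : ℝ → Y,
    IsParameter φ μX ∧ IsParameter ψ μY ∧
    ∃ I₀ : Set ℝ, MeasurableSet I₀ ∧ I₀ ⊆ Set.Ico (0 : ℝ) 1 ∧
      ENNReal.ofReal (1 - ε) ≤ volume I₀ ∧
      ∀ s ∈ I₀, ∀ t ∈ I₀, |dX (φ s) (φ t) - dY (ψ s) (ψ t)| ≤ ε}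

open Set Filter Topology

/-- Quantile transform: every Borel probability measure on `ℝ` is the pushforward of
the Lebesgue measure on `[0,1)`. -/
lemma exists_param_real (ν : Measure ℝ) [IsProbabilityMeasure ν] :
    ∃ g : ℝ → ℝ, Measurable g ∧ Measure.map g (volume.restrict (Set.Ico (0:ℝ) 1)) = ν := by
  classical
  set F : StieltjesFunction ℝ := ProbabilityTheory.cdf ν with hF
  have hFmono : Monotone F := ProbabilityTheory.monotone_cdf ν
  have hF0 : Tendsto F atBot (𝓝 0) := ProbabilityTheory.tendsto_cdf_atBot ν
  have hF1 : Tendsto F atTop (𝓝 1) := ProbabilityTheory.tendsto_cdf_atTop ν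
  set h : ℝ → ℝ := fun t => sInf {x | t ≤ F x} with hh
  have hne : ∀ t : ℝ, t < 1 → {x | t ≤ F x}.Nonempty := by
    intro t ht
    exact (hF1.eventually (eventually_ge_nhds ht)).exists
  have hbdd : ∀ t : ℝ, 0 < t → BddBelow {x | t ≤ F x} := by
    intro t ht
    obtain ⟨x₀, hx₀⟩ := eventually_atBot.mp (hF0.eventually (eventually_lt_nhds ht))
    refine ⟨x₀, fun y hy => ?_⟩
    by_contra hxy
    exact absurd hy.out (not_le.mpr (hx₀ y (le_of_not_ge hxy)))
  have hup : ∀ t : ℝ, ∀ y ∈ {x | t ≤ F x}, ∀ z, y ≤ z → z ∈ {x | t ≤ F x} :=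
    fun t y hy z hz => le_trans hy.out (hFmono hz)
  have hmem : ∀ t ∈ Ioo (0:ℝ) 1, t ≤ F (h t) := by
    intro t ht
    have hbd := hbdd t ht.1
    have hnet := hne t ht.2
    have hrc : Tendsto F (𝓝[>] (h t)) (𝓝 (F (h t))) :=
      ((ProbabilityTheory.cdf ν).right_continuous (h t)).tendsto.mono_left
        (nhdsWithin_mono _ Ioi_subset_Ici_self)
    refine ge_of_tendsto hrc ?_
    filter_upwards [self_mem_nhdsWithin] with y hy
    obtain ⟨s, hs, hsy⟩ := (csInf_lt_iff hbd hnet).mp hy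
    exact (hup t s hs y hsy.le).out
  have key : ∀ t ∈ Ioo (0:ℝ) 1, ∀ x : ℝ, (h t ≤ x ↔ t ≤ F x) := by
    intro t ht x
    constructor
    · intro hx
      exact (hup t (h t) (hmem t ht) x hx).out
    · intro hx
      exact csInf_le (hbdd t ht.1) hx
  have hmono : MonotoneOn h (Ioo (0:ℝ) 1) := by
    intro t ht t' ht' htt'
    exact (key t ht (h t')).mpr (le_trans htt' (hmem t' ht'))
  set g : ℝ → ℝ := fun t => if t ∈ Ioo (0:ℝ) 1 then h t else 0 with hg
  have hgmeas : Measurable g := by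
    refine measurable_of_Iic (fun x => ?_)
    have hA : MeasurableSet {t | t ∈ Ioo (0:ℝ) 1 ∧ h t ≤ x} := by
      refine Set.OrdConnected.measurableSet (ordConnected_def.mpr ?_)
      rintro a ⟨ha, hax⟩ b ⟨hb, hbx⟩ u hu
      have hu' : u ∈ Ioo (0:ℝ) 1 := ⟨lt_of_lt_of_le ha.1 hu.1, lt_of_le_of_lt hu.2 hb.2⟩
      exact ⟨hu', le_trans (hmono hu' hb hu.2) hbx⟩
    have : g ⁻¹' Iic x = {t | t ∈ Ioo (0:ℝ) 1 ∧ h t ≤ x} ∪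
        ((Ioo (0:ℝ) 1)ᶜ ∩ {t : ℝ | (0:ℝ) ≤ x}) := by
      ext t
      simp only [Set.mem_preimage, Set.mem_Iic, Set.mem_union, Set.mem_inter_iff,
        Set.mem_compl_iff, Set.mem_setOf_eq, hg]
      by_cases ht : t ∈ Ioo (0:ℝ) 1
      · rw [if_pos ht]; tauto
      · rw [if_neg ht]; simp only [ht, false_and, false_or, not_false_iff, true_and]
    rw [this]
    exact hA.union (measurableSet_Ioo.compl.inter (MeasurableSet.const _))
  refine ⟨g, hgmeas, ?_⟩
  haveI : IsProbabilityMeasure (volume.restrict (Set.Ico (0:ℝ) 1)) :=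
    ⟨by simp⟩
  haveI : IsProbabilityMeasure (Measure.map g (volume.restrict (Set.Ico (0:ℝ) 1))) :=
    Measure.isProbabilityMeasure_map hgmeas.aemeasurable
  refine Measure.ext_of_Iic _ ν (fun x => ?_)
  rw [Measure.map_apply hgmeas measurableSet_Iic, Measure.restrict_apply' measurableSet_Ico]
  have hFx0 : 0 ≤ F x := ProbabilityTheory.cdf_nonneg ν x
  have hFx1 : F x ≤ 1 := ProbabilityTheory.cdf_le_one ν x
  have hle : g ⁻¹' Iic x ∩ Ico (0:ℝ) 1 ⊆ {(0:ℝ)} ∪ Ioc 0 (F x) := by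
    rintro t ⟨htx, ht0, ht1⟩
    rcases eq_or_lt_of_le ht0 with h0 | h0
    · exact Or.inl (by simp [h0.symm])
    · have htI : t ∈ Ioo (0:ℝ) 1 := ⟨h0, ht1⟩
      have : h t ≤ x := by
        simpa only [Set.mem_preimage, Set.mem_Iic, hg, if_pos htI] using htx
      exact Or.inr ⟨h0, (key t htI x).mp this⟩
  have hge : Ioo (0:ℝ) (min (F x) 1) ⊆ g ⁻¹' Iic x ∩ Ico (0:ℝ) 1 := by
    rintro t ⟨ht0, ht1⟩
    have htI : t ∈ Ioo (0:ℝ) 1 := ⟨ht0, lt_of_lt_of_le ht1 (min_le_right _ _)⟩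
    have htF : t ≤ F x := le_of_lt (lt_of_lt_of_le ht1 (min_le_left _ _))
    refine ⟨?_, ⟨ht0.le, htI.2⟩⟩
    simp only [hg, htI, if_true, Set.mem_preimage, Set.mem_Iic]
    exact (key t htI x).mpr htF
  have hup' : volume (g ⁻¹' Iic x ∩ Ico (0:ℝ) 1) ≤ ENNReal.ofReal (F x) := by
    refine le_trans (measure_mono hle) (le_trans (measure_union_le _ _) ?_)
    simp [Real.volume_Ioc, hFx0]
  have hlo : ENNReal.ofReal (F x) ≤ volume (g ⁻¹' Iic x ∩ Ico (0:ℝ) 1) := by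
    refine le_trans ?_ (measure_mono hge)
    rw [Real.volume_Ioo, min_eq_left hFx1, sub_zero]
  rw [le_antisymm hup' hlo, ProbabilityTheory.ofReal_cdf]

/-- Every probability measure on a nonempty standard Borel space admits a parameter. -/
lemma exists_param {E : Type*} [MeasurableSpace E] [StandardBorelSpace E] [Nonempty E]
    (ν : Measure E) [IsProbabilityMeasure ν] :
    ∃ q : ℝ → E, Measurable q ∧ Measure.map q (volume.restrict (Set.Ico (0:ℝ) 1)) = ν := by
  obtain ⟨e, he⟩ := MeasureTheory.exists_measurableEmbedding_real E
  haveI : IsProbabilityMeasure (Measure.map e ν) :=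
    Measure.isProbabilityMeasure_map he.measurable.aemeasurable
  obtain ⟨g, hg, hmap⟩ := exists_param_real (Measure.map e ν)
  obtain ⟨r, hr, hre⟩ := he.exists_measurable_extend measurable_id (fun _ => ‹Nonempty E›)
  refine ⟨r ∘ g, hr.comp hg, ?_⟩
  rw [← Measure.map_map hr hg, hmap, Measure.map_map hr he.measurable, hre, Measure.map_id]

/-- Componentwise pushforward of a finite product measure. -/
lemma map_pi_comp {n : ℕ} {α β : Type*} [MeasurableSpace α] [MeasurableSpace β]
    (f : α → β) (hf : Measurable f) (μ : Measure α) [IsProbabilityMeasure μ] :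
    Measure.map (fun (v : Fin n → α) (i : Fin n) => f (v i)) (Measure.pi fun _ => μ)
      = Measure.pi fun _ => Measure.map f μ := by
  haveI : IsProbabilityMeasure (Measure.map f μ) := Measure.isProbabilityMeasure_map hf.aemeasurable
  have hmeas : Measurable (fun (v : Fin n → α) (i : Fin n) => f (v i)) :=
    measurable_pi_lambda _ fun i => hf.comp (measurable_pi_apply i)
  refine (Measure.pi_eq fun s hs => ?_).symm
  rw [Measure.map_apply hmeas (MeasurableSet.univ_pi hs)]
  have hpre : (fun (v : Fin n → α) (i : Fin n) => f (v i)) ⁻¹' Set.pi Set.univ s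
      = Set.pi Set.univ fun i => f ⁻¹' s i := by
    ext v; simp
  rw [hpre, Measure.pi_pi]
  exact Finset.prod_congr rfl fun i _ => (Measure.map_apply hf (hs i)).symm

lemma lp_one_side {n : ℕ} (hn : 1 ≤ n) {r : ℝ} (hr : 1 ≤ r) {ε : ℝ} (hε : 0 ≤ ε)
    {a b : Fin n → ℝ} (ha : ∀ i, 0 ≤ a i) (hb : ∀ i, 0 ≤ b i)
    (hab : ∀ i, |a i - b i| ≤ ε) :
    (∑ i, a i ^ r) ^ (1/r) ≤ (∑ i, b i ^ r) ^ (1/r) + n * ε := by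
  have hr0 : (0:ℝ) < r := lt_of_lt_of_le zero_lt_one hr
  have h1 : ∀ i, a i ^ r = |(a i - b i) + b i| ^ r := by
    intro i; rw [sub_add_cancel, abs_of_nonneg (ha i)]
  calc (∑ i, a i ^ r) ^ (1/r)
      = (∑ i, |(a i - b i) + b i| ^ r) ^ (1/r) := by
        congr 1; exact Finset.sum_congr rfl fun i _ => h1 i
    _ ≤ (∑ i, |a i - b i| ^ r) ^ (1/r) + (∑ i, |b i| ^ r) ^ (1/r) :=
        Real.Lp_add_le Finset.univ (fun i => a i - b i) b hr
    _ ≤ (∑ _i : Fin n, ε ^ r) ^ (1/r) + (∑ i, b i ^ r) ^ (1/r) := by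
        refine add_le_add ?_ (le_of_eq ?_)
        · refine Real.rpow_le_rpow (Finset.sum_nonneg fun i _ => Real.rpow_nonneg (abs_nonneg _) r)
            (Finset.sum_le_sum fun i _ => Real.rpow_le_rpow (abs_nonneg _) (hab i) hr0.le)
            (by positivity)
        · congr 1; exact Finset.sum_congr rfl fun i _ => by rw [abs_of_nonneg (hb i)]
    _ = ((n : ℝ) * ε ^ r) ^ (1/r) + (∑ i, b i ^ r) ^ (1/r) := by
        rw [Finset.sum_const, Finset.card_univ, Fintype.card_fin, nsmul_eq_mul]
    _ ≤ (n : ℝ) * ε + (∑ i, b i ^ r) ^ (1/r) := by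
        gcongr ?_ + _
        have her : (ε ^ r) ^ (1/r) = ε := by
          rw [← Real.rpow_mul hε, mul_one_div_cancel (ne_of_gt hr0), Real.rpow_one]
        have hne : (n:ℝ) ^ (1/r) * ε = ((n:ℝ) * ε ^ r) ^ (1/r) := by
          rw [Real.mul_rpow (Nat.cast_nonneg n) (Real.rpow_nonneg hε r), her]
        rw [← hne]
        have : (n:ℝ) ^ (1/r) ≤ (n:ℝ) ^ (1:ℝ) :=
          Real.rpow_le_rpow_of_exponent_le (by exact_mod_cast hn)
            (by rw [div_le_one hr0]; exact hr)
        rw [Real.rpow_one] at this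
        exact mul_le_mul_of_nonneg_right this hε
    _ = (∑ i, b i ^ r) ^ (1/r) + (n : ℝ) * ε := by ring

lemma lp_abs_diff {n : ℕ} (hn : 1 ≤ n) {r : ℝ} (hr : 1 ≤ r) {ε : ℝ} (hε : 0 ≤ ε)
    {a b : Fin n → ℝ} (ha : ∀ i, 0 ≤ a i) (hb : ∀ i, 0 ≤ b i)
    (hab : ∀ i, |a i - b i| ≤ ε) :
    |(∑ i, a i ^ r) ^ (1/r) - (∑ i, b i ^ r) ^ (1/r)| ≤ n * ε := by
  rw [abs_sub_le_iff]
  constructor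
  · have := lp_one_side hn hr hε ha hb hab; linarith
  · have := lp_one_side hn hr hε hb ha (fun i => by rw [abs_sub_comm]; exact hab i); linarith

lemma sup_abs_diff {n : ℕ} (hn : 1 ≤ n) {ε : ℝ} (hε : 0 ≤ ε)
    {a b : Fin n → ℝ} (hab : ∀ i, |a i - b i| ≤ ε) :
    |(⨆ i, a i) - ⨆ i, b i| ≤ ε := by
  haveI : Nonempty (Fin n) := ⟨⟨0, hn⟩⟩
  have hside : ∀ (a b : Fin n → ℝ), (∀ i, |a i - b i| ≤ ε) → (⨆ i, a i) ≤ (⨆ i, b i) + ε := by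
    intro a b hab
    refine ciSup_le fun i => ?_
    have h1 := (abs_le.1 (hab i)).2
    have h2 : b i ≤ ⨆ j, b j := le_ciSup (Finite.bddAbove_range b) i
    linarith
  rw [abs_sub_le_iff]
  have h1 := hside a b hab
  have h2 := hside b a (fun i => by rw [abs_sub_comm]; exact hab i)
  constructor <;> linarith

/-- **Lemma 3.3.** For mm-spaces `X`, `Y`, `n ≥ 1` and `1 ≤ p ≤ ∞`,
`□(X_p^n, Y_p^n) ≤ n · n! · □(X,Y)`. -/
theorem boxDist_lp_product_le
    {X : Type*} [MetricSpace X] [CompleteSpace X] [TopologicalSpace.SeparableSpace X]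
    [MeasurableSpace X] [BorelSpace X]
    {Y : Type*} [MetricSpace Y] [CompleteSpace Y] [TopologicalSpace.SeparableSpace Y]
    [MeasurableSpace Y] [BorelSpace Y]
    (μX : Measure X) [IsProbabilityMeasure μX]
    (μY : Measure Y) [IsProbabilityMeasure μY]
    (n : ℕ) (hn : 1 ≤ n) (p : ℝ≥0∞) (hp : 1 ≤ p) :
    boxDist (lpDist' dist p) (lpDist' dist p)
        (Measure.pi fun _ : Fin n => μX) (Measure.pi fun _ : Fin n => μY) ≤
      (n : ℝ) * (n.factorial : ℝ) * boxDist dist dist μX μY := by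
  classical
  haveI : Nonempty X := by
    rcases isEmpty_or_nonempty X with hE | hNE
    · have h1 : μX Set.univ = 1 := measure_univ
      rw [Set.univ_eq_empty_iff.mpr hE, measure_empty] at h1
      exact absurd h1 (by norm_num)
    · exact hNE
  haveI : Nonempty Y := by
    rcases isEmpty_or_nonempty Y with hE | hNE
    · have h1 : μY Set.univ = 1 := measure_univ
      rw [Set.univ_eq_empty_iff.mpr hE, measure_empty] at h1
      exact absurd h1 (by norm_num)
    · exact hNE
  haveI hProbIco : IsProbabilityMeasure (volume.restrict (Set.Ico (0:ℝ) 1)) := ⟨by simp⟩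
  set c : ℝ := (n : ℝ) * (n.factorial : ℝ) with hcdef
  have hn1 : (1:ℝ) ≤ (n:ℝ) := by exact_mod_cast hn
  have hfac1 : (1:ℝ) ≤ (n.factorial : ℝ) := by exact_mod_cast n.factorial_pos
  have hc1 : (1:ℝ) ≤ c := by nlinarith
  have hcn : (n:ℝ) ≤ c := by nlinarith
  set S := {ε : ℝ | 0 ≤ ε ∧ ∃ φ : ℝ → X, ∃ ψ : ℝ → Y,
    IsParameter φ μX ∧ IsParameter ψ μY ∧
    ∃ I₀ : Set ℝ, MeasurableSet I₀ ∧ I₀ ⊆ Set.Ico (0 : ℝ) 1 ∧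
      ENNReal.ofReal (1 - ε) ≤ volume I₀ ∧
      ∀ s ∈ I₀, ∀ t ∈ I₀, |dist (φ s) (φ t) - dist (ψ s) (ψ t)| ≤ ε} with hSdef
  set T := {ε : ℝ | 0 ≤ ε ∧ ∃ Φ : ℝ → (Fin n → X), ∃ Ψ : ℝ → (Fin n → Y),
    IsParameter Φ (Measure.pi fun _ : Fin n => μX) ∧
    IsParameter Ψ (Measure.pi fun _ : Fin n => μY) ∧
    ∃ I₀ : Set ℝ, MeasurableSet I₀ ∧ I₀ ⊆ Set.Ico (0 : ℝ) 1 ∧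
      ENNReal.ofReal (1 - ε) ≤ volume I₀ ∧
      ∀ s ∈ I₀, ∀ t ∈ I₀,
        |lpDist' dist p (Φ s) (Φ t) - lpDist' dist p (Ψ s) (Ψ t)| ≤ ε} with hTdef
  have hbddT : BddBelow T := ⟨0, fun x hx => hx.1⟩
  obtain ⟨φ₁, hφ₁m, hφ₁p⟩ := exists_param μX
  obtain ⟨ψ₁, hψ₁m, hψ₁p⟩ := exists_param μY
  have hSne : S.Nonempty := ⟨1, zero_le_one, φ₁, ψ₁, ⟨hφ₁m, hφ₁p⟩, ⟨hψ₁m, hψ₁p⟩, ∅,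
    MeasurableSet.empty, Set.empty_subset _, by simp,
    fun s hs => absurd hs (Set.notMem_empty s)⟩
  have key : ∀ ε ∈ S, c * ε ∈ T := by
    rintro ε ⟨hε0, φ, ψ, hφ, hψ, I₀, hI₀m, hI₀sub, hI₀vol, hI₀dist⟩
    obtain ⟨q, hq, hqmap⟩ :=
      exists_param (Measure.pi fun _ : Fin n => volume.restrict (Set.Ico (0:ℝ) 1))
    have hcε0 : (0:ℝ) ≤ c * ε := mul_nonneg (by linarith) hε0
    set Φ : ℝ → (Fin n → X) := fun s i => φ (q s i) with hΦdef
    set Ψ : ℝ → (Fin n → Y) := fun s i => ψ (q s i) with hΨdef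
    have hΦm : Measurable Φ :=
      measurable_pi_lambda _ fun i => hφ.1.comp ((measurable_pi_apply i).comp hq)
    have hΨm : Measurable Ψ :=
      measurable_pi_lambda _ fun i => hψ.1.comp ((measurable_pi_apply i).comp hq)
    have hΦp : IsParameter Φ (Measure.pi fun _ : Fin n => μX) := by
      refine ⟨hΦm, ?_⟩
      have hcompm : Measurable (fun (v : Fin n → ℝ) (i : Fin n) => φ (v i)) :=
        measurable_pi_lambda _ fun i => hφ.1.comp (measurable_pi_apply i)
      have hcomp : Φ = (fun (v : Fin n → ℝ) (i : Fin n) => φ (v i)) ∘ q := rfl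
      rw [hcomp, ← Measure.map_map hcompm hq, hqmap, map_pi_comp φ hφ.1, hφ.2]
    have hΨp : IsParameter Ψ (Measure.pi fun _ : Fin n => μY) := by
      refine ⟨hΨm, ?_⟩
      have hcompm : Measurable (fun (v : Fin n → ℝ) (i : Fin n) => ψ (v i)) :=
        measurable_pi_lambda _ fun i => hψ.1.comp (measurable_pi_apply i)
      have hcomp : Ψ = (fun (v : Fin n → ℝ) (i : Fin n) => ψ (v i)) ∘ q := rfl
      rw [hcomp, ← Measure.map_map hcompm hq, hqmap, map_pi_comp ψ hψ.1, hψ.2]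
    have hPmeas : MeasurableSet (Set.pi Set.univ fun _ : Fin n => I₀) :=
      MeasurableSet.univ_pi fun _ => hI₀m
    refine ⟨hcε0, Φ, Ψ, hΦp, hΨp,
      q ⁻¹' (Set.pi Set.univ fun _ : Fin n => I₀) ∩ Set.Ico (0:ℝ) 1,
      (hq hPmeas).inter measurableSet_Ico, Set.inter_subset_right, ?_, ?_⟩
    · have h1 : volume (q ⁻¹' (Set.pi Set.univ fun _ : Fin n => I₀) ∩ Set.Ico (0:ℝ) 1)
          = Measure.pi (fun _ : Fin n => volume.restrict (Set.Ico (0:ℝ) 1))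
              (Set.pi Set.univ fun _ => I₀) := by
        rw [← Measure.restrict_apply' measurableSet_Ico, ← Measure.map_apply hq hPmeas, hqmap]
      have hI₀r : (volume.restrict (Set.Ico (0:ℝ) 1)) I₀ = volume I₀ := by
        rw [Measure.restrict_apply hI₀m, Set.inter_eq_self_of_subset_left hI₀sub]
      rw [h1, Measure.pi_pi]
      simp only [hI₀r, Finset.prod_const, Finset.card_univ, Fintype.card_fin]
      by_cases hbig : 1 - c * ε ≤ 0
      · rw [ENNReal.ofReal_eq_zero.mpr hbig]
        exact zero_le
      · push_neg at hbig
        have hε1 : 0 ≤ 1 - ε := by nlinarith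
        calc ENNReal.ofReal (1 - c * ε) ≤ ENNReal.ofReal ((1 - ε)^n) := by
              apply ENNReal.ofReal_le_ofReal
              have hb := one_add_mul_le_pow (a := -ε) (by linarith) n
              have heq : (1:ℝ) + -ε = 1 - ε := by ring
              rw [heq] at hb
              have hcnε : (n:ℝ) * ε ≤ c * ε := mul_le_mul_of_nonneg_right hcn hε0
              linarith [hb, hcnε]
          _ = (ENNReal.ofReal (1 - ε))^n := ENNReal.ofReal_pow hε1 n
          _ ≤ (volume I₀)^n := pow_le_pow_left' hI₀vol n
    · rintro s ⟨hsP, _⟩ t ⟨htP, _⟩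
      have hsmem : ∀ i, q s i ∈ I₀ := fun i => hsP i (Set.mem_univ i)
      have htmem : ∀ i, q t i ∈ I₀ := fun i => htP i (Set.mem_univ i)
      have hab : ∀ i, |dist (Φ s i) (Φ t i) - dist (Ψ s i) (Ψ t i)| ≤ ε :=
        fun i => hI₀dist _ (hsmem i) _ (htmem i)
      have hnε : (n:ℝ) * ε ≤ c * ε := mul_le_mul_of_nonneg_right hcn hε0
      by_cases hpi : p = ∞
      · simp only [lpDist', if_pos hpi]
        exact le_trans (sup_abs_diff hn hε0 hab) (le_mul_of_one_le_left hε0 hc1)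
      · simp only [lpDist', if_neg hpi, lpDist]
        have hr : 1 ≤ p.toReal := by
          have := ENNReal.toReal_mono hpi hp
          simpa using this
        exact le_trans
          (lp_abs_diff hn hr hε0 (fun i => dist_nonneg) (fun i => dist_nonneg) hab) hnε
  show sInf T ≤ c * sInf S
  have hcpos : (0:ℝ) < c := lt_of_lt_of_le zero_lt_one hc1
  have h3 : sInf T / c ≤ sInf S := by
    refine le_csInf hSne fun ε hε => ?_
    rw [div_le_iff₀ hcpos]
    calc sInf T ≤ c * ε := csInf_le hbddT (key ε hε)
      _ = ε * c := mul_comm _ _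
  calc sInf T = (sInf T / c) * c := by field_simp
    _ ≤ sInf S * c := mul_le_mul_of_nonneg_right h3 (by linarith)
    _ = c * sInf S := mul_comm _ _
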